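/- Let A ⊆ Z_n × Z_n and let h, h' ∈ Z_n × Z_n generate the same cyclic subgroup. Then 1̂_A^{sym}(h) = 0 implies 1̂_A^{sym}(h') = 0. -/

import Mathlib

open Complex
open scoped Classical

/-- The character value `e^{2πi t/n}` for `t : ZMod n`. -/
noncomputable def charVal (n : ℕ) (t : ZMod n) : ℂ :=
  Complex.exp (2 * Real.pi * Complex.I * (t.val : ℂ) / (n : ℂ))

/-- The symplectic form `⟨x,y⟩ = x₁y₂ - x₂y₁` on `ZMod n × ZMod n`. -/
def sympForm {n : ℕ} (x y : ZMod n × ZMod n) : ZMod n :=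
  x.1 * y.2 - x.2 * y.1

/-- Symplectic Fourier transform of the indicator of `A`. -/
noncomputable def symFT {n : ℕ} (A : Set (ZMod n × ZMod n)) (ξ : ZMod n × ZMod n) : ℂ :=
  ∑ᶠ a ∈ A, charVal n (sympForm a ξ)

/-- Euclidean Fourier transform of the indicator of `A`. -/
noncomputable def euclFT {n : ℕ} (A : Set (ZMod n × ZMod n)) (ξ : ZMod n × ZMod n) : ℂ :=
  ∑ᶠ a ∈ A, charVal n (a.1 * ξ.1 + a.2 * ξ.2)

/-- Difference set `ΔA = {a - a' : a,a' ∈ A, a ≠ a'}`. -/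
def diffSet {G : Type*} [AddGroup G] (A : Set G) : Set G :=
  {d | ∃ a ∈ A, ∃ a' ∈ A, a ≠ a' ∧ d = a - a'}

/-- `A ⊕ B = G`: every element of `G` is uniquely a sum `a + b` with `a ∈ A`, `b ∈ B`. -/
def IsTilingPair {G : Type*} [AddCommGroup G] (A B : Set G) : Prop :=
  ∀ g : G, ∃! p : G × G, p.1 ∈ A ∧ p.2 ∈ B ∧ p.1 + p.2 = g

/-- Symplectic orthogonal set `H^{⊥s}`. -/
def sympPerp {n : ℕ} (H : Set (ZMod n × ZMod n)) : Set (ZMod n × ZMod n) :=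
  {g | ∀ h ∈ H, sympForm g h = 0}

/-- `(A,S)` is a symplectic spectral pair: `|A| = |S|` and `ΔS ⊆ Z(1̂_A^{sym})`. -/
def IsSympSpectralPair {n : ℕ} (A S : Set (ZMod n × ZMod n)) : Prop :=
  Nat.card A = Nat.card S ∧ ∀ s ∈ S, ∀ s' ∈ S, s ≠ s' → symFT A (s - s') = 0

section aux

variable {n : ℕ}

lemma charVal_eq_pow [NeZero n] (t : ZMod n) :
    charVal n t = Complex.exp (2 * Real.pi * Complex.I / n) ^ (t.val : ℤ) := by
  rw [zpow_natCast, ← Complex.exp_nat_mul, charVal]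
  ring_nf

lemma charVal_intCast_mul [NeZero n] (c : ℤ) (t : ZMod n) :
    charVal n ((c : ZMod n) * t) = charVal n t ^ c := by
  have hζ := Complex.isPrimitiveRoot_exp n (NeZero.ne n)
  rw [charVal_eq_pow, charVal_eq_pow, ← zpow_mul]
  set ζ := Complex.exp (2 * Real.pi * Complex.I / n)
  have hdvd : (n : ℤ) ∣ ((((c : ZMod n) * t).val : ℤ) - (t.val : ℤ) * c) := by
    rw [← ZMod.intCast_zmod_eq_zero_iff_dvd]
    push_cast
    simp [ZMod.natCast_val, ZMod.cast_id]
    ring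
  obtain ⟨q, hq⟩ := hdvd
  have : ((((c : ZMod n) * t).val : ℤ)) = (t.val : ℤ) * c + n * q := by linarith
  rw [this, zpow_add₀ (Complex.exp_ne_zero _), zpow_mul ζ ((n : ℤ)) q, zpow_natCast ζ n,
    hζ.pow_eq_one, one_zpow, mul_one, zpow_mul, zpow_natCast]

lemma sympForm_zsmul (c : ℤ) (a x : ZMod n × ZMod n) :
    sympForm a (c • x) = (c : ZMod n) * sympForm a x := by
  simp only [sympForm, Prod.smul_fst, Prod.smul_snd, zsmul_eq_mul, Prod.fst_mul,
    Prod.snd_mul, Prod.fst_intCast, Prod.snd_intCast, smul_eq_mul]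
  ring

lemma charVal_zero [NeZero n] : charVal n (0 : ZMod n) = 1 := by
  simp [charVal]

end aux

theorem symFT_zero_of_same_zmultiples (n : ℕ) (hn : 0 < n)
    (A : Set (ZMod n × ZMod n)) (h h' : ZMod n × ZMod n)
    (hgen : AddSubgroup.zmultiples h = AddSubgroup.zmultiples h')
    (hz : symFT A h = 0) : symFT A h' = 0 := by
  haveI : NeZero n := ⟨hn.ne'⟩
  obtain ⟨k, hk⟩ := AddSubgroup.mem_zmultiples_iff.mp
    (hgen ▸ AddSubgroup.mem_zmultiples h')
  obtain ⟨l, hl⟩ := AddSubgroup.mem_zmultiples_iff.mp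
    (hgen.symm ▸ AddSubgroup.mem_zmultiples h)
  set m := addOrderOf h with hm
  have hmpos : 0 < m := addOrderOf_pos h
  haveI : NeZero m := ⟨hmpos.ne'⟩
  -- (m : ℤ) ∣ l * k - 1
  have hlk : ((m : ℤ)) ∣ l * k - 1 := by
    rw [hm, addOrderOf_dvd_iff_zsmul_eq_zero, sub_smul, mul_smul, hk, hl, one_smul,
      sub_self]
  -- μ a := charVal n (sympForm a h), μ a ^ m = 1
  set μ : (ZMod n × ZMod n) → ℂ := fun a => charVal n (sympForm a h) with hμ
  have hμm : ∀ a, μ a ^ m = 1 := by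
    intro a
    have h0 : ((m : ℤ)) • h = 0 := by
      simpa using addOrderOf_nsmul_eq_zero h
    have := charVal_intCast_mul (n := n) (m : ℤ) (sympForm a h)
    rw [← sympForm_zsmul, h0] at this
    simp only [sympForm, Prod.fst_zero, Prod.snd_zero, mul_zero, zero_mul, sub_zero,
      charVal_zero] at this
    simpa [zpow_natCast, hμ, sympForm] using this.symm
  set ζ : ℂ := Complex.exp (2 * Real.pi * Complex.I / m) with hζdef
  have hζ : IsPrimitiveRoot ζ m := Complex.isPrimitiveRoot_exp m (NeZero.ne m)
  -- exponents
  have hE : ∀ a : ZMod n × ZMod n, ∃ e : ℕ, ζ ^ e = μ a := by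
    intro a
    obtain ⟨e, _, he⟩ := hζ.eq_pow_of_pow_eq_one (hμm a)
    exact ⟨e, he⟩
  choose E hEspec using hE
  -- finsum to finset sum
  have hsum : ∀ ξ, symFT A ξ = ∑ a ∈ A.toFinset, charVal n (sympForm a ξ) := by
    intro ξ
    rw [symFT, ← finsum_mem_coe_finset, Set.coe_toFinset]
  -- the polynomial
  set P : Polynomial ℚ := ∑ a ∈ A.toFinset, Polynomial.X ^ (E a) with hP
  have haevalζ : Polynomial.aeval ζ P = 0 := by
    rw [hP, map_sum]
    simp only [map_pow, Polynomial.aeval_X]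
    rw [← hz, hsum]
    exact Finset.sum_congr rfl fun a _ => hEspec a
  -- k' coprime to m
  set k' : ℕ := (k % (m : ℤ)).toNat with hk'
  have hk'cast : ((k' : ℤ)) = k % (m : ℤ) :=
    Int.toNat_of_nonneg (Int.emod_nonneg k (by exact_mod_cast hmpos.ne'))
  have hcop : Nat.Coprime k' m := by
    rw [← ZMod.isUnit_iff_coprime]
    have : ((l : ZMod m)) * ((k' : ℕ) : ZMod m) = 1 := by
      have h1 : ((k' : ℕ) : ZMod m) = ((k : ℤ) : ZMod m) := by
        calc ((k' : ℕ) : ZMod m) = (((k' : ℤ)) : ZMod m) := by push_cast; ring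
          _ = ((k % (m : ℤ) : ℤ) : ZMod m) := by rw [hk'cast]
          _ = ((k : ℤ) : ZMod m) := ZMod.intCast_mod k m
      rw [h1]
      have := (ZMod.intCast_zmod_eq_zero_iff_dvd (l * k - 1) m).mpr hlk
      push_cast at this
      have h2 : ((l : ZMod m)) * ((k : ZMod m)) = 1 := by linear_combination this
      exact_mod_cast h2
    exact IsUnit.of_mul_eq_one _ (by rw [mul_comm] at this; exact this)
  -- ζ ^ k' is primitive, same minpoly
  have hζk : IsPrimitiveRoot (ζ ^ k') m := hζ.pow_of_coprime k' hcop
  have hminpoly : minpoly ℚ (ζ ^ k') = minpoly ℚ ζ := by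
    rw [← Polynomial.cyclotomic_eq_minpoly_rat hζ hmpos,
      ← Polynomial.cyclotomic_eq_minpoly_rat hζk hmpos]
  have hdvd : minpoly ℚ (ζ ^ k') ∣ P := by
    rw [hminpoly]
    exact minpoly.dvd ℚ ζ haevalζ
  have haevalζk : Polynomial.aeval (ζ ^ k') P = 0 := by
    obtain ⟨q, hq⟩ := hdvd
    rw [hq, map_mul, minpoly.aeval, zero_mul]
  -- conclude
  have hμk : ∀ a, μ a ^ (k' : ℕ) = charVal n (sympForm a h') := by
    intro a
    have hkk' : μ a ^ (k : ℤ) = μ a ^ (k' : ℕ) := by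
      conv_lhs => rw [← Int.emod_add_mul_ediv k (m : ℤ)]
      have hne : μ a ≠ 0 := by
        rw [hμ]; simp only [charVal]; exact Complex.exp_ne_zero _
      rw [zpow_add₀ hne, zpow_mul, zpow_natCast, hμm a, one_zpow, mul_one,
        ← hk'cast, zpow_natCast]
    rw [← hkk', hμ]
    rw [← charVal_intCast_mul, ← sympForm_zsmul, hk]
  rw [hsum, ← haevalζk, hP, map_sum]
  simp only [map_pow, Polynomial.aeval_X]
  refine Finset.sum_congr rfl fun a _ => ?_
  rw [← hμk a, ← hEspec a, ← pow_mul, ← pow_mul, mul_comm]
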